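/- Let S be a finite nonempty set, c : binom(S,2) → ℝ, i ∈ S, and S_0 ⊆ S∖{i}. Let S' = S∖(S_0 ∪ {i}) and define c'_p = Σ_{q∈S∖{p}} c_{pq} − 2·c_{pi} for every p ∈ S', c'_{pq} = −2·c_{pq} for every {p,q} ∈ binom(S',2), and c'_∅ = Σ_{q∈S∖{i}} c_{qi}. Then min{ Σ_{{p,q}∈δ(R)} c_{pq} : R ⊆ S, i ∈ R, S_0 ∩ R = ∅ } = min{ Σ_{{p,q}∈binom(S',2)} c'_{pq}·y_p·y_q + Σ_{p∈S'} c'_p·y_p + c'_∅ : y ∈ {0,1}^{S'} }. -/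

import Mathlib

open Finset

/-- `binom(S,2)`: the set of 2-element subsets of the ground set. -/
def pairs (V : Type*) [Fintype V] [DecidableEq V] : Finset (Finset V) :=
  (univ : Finset V).powersetCard 2

/-- `δ(R)`: the pairs having exactly one element in `R`. -/
def cut {V : Type*} [Fintype V] [DecidableEq V] (R : Finset V) : Finset (Finset V) :=
  (pairs V).filter fun e => (e ∩ R).card = 1

section Aux

variable {V : Type*} [DecidableEq V]

lemma sum_pairs (T : Finset V) (g : Finset V → ℝ) :
    2 * ∑ e ∈ T.powersetCard 2, g e = ∑ p ∈ T, ∑ q ∈ T.erase p, g {p, q} := by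
  letI : LinearOrder V := IsWellOrder.linearOrder WellOrderingRel
  have himg : T.powersetCard 2
      = (T.offDiag.filter fun x => x.1 < x.2).image fun x => ({x.1, x.2} : Finset V) := by
    ext e
    simp only [Finset.mem_powersetCard, Finset.mem_image, Finset.mem_filter,
      Finset.mem_offDiag, Finset.card_eq_two]
    constructor
    · rintro ⟨hsub, a, b, hab, rfl⟩
      rcases lt_or_gt_of_ne hab with h | h
      · exact ⟨(a, b), ⟨⟨hsub (by simp), hsub (by simp), hab⟩, h⟩, rfl⟩
      · exact ⟨(b, a), ⟨⟨hsub (by simp), hsub (by simp), hab.symm⟩, h⟩,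
          by rw [Finset.pair_comm]⟩
    · rintro ⟨⟨a, b⟩, ⟨⟨ha, hb, hne⟩, -⟩, rfl⟩
      refine ⟨?_, a, b, hne, rfl⟩
      intro x hx
      simp only [Finset.mem_insert, Finset.mem_singleton] at hx
      rcases hx with rfl | rfl <;> assumption
  have hinj : Set.InjOn (fun x : V × V => ({x.1, x.2} : Finset V))
      ↑(T.offDiag.filter fun x => x.1 < x.2) := by
    rintro ⟨a, b⟩ h1 ⟨c, d⟩ h2 he
    simp only [Finset.coe_filter, Set.mem_setOf_eq, Finset.mem_coe, Finset.mem_offDiag] at h1 h2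
    simp only at he
    have hac : a ∈ ({c, d} : Finset V) := he ▸ (by simp)
    have hbc : b ∈ ({c, d} : Finset V) := he ▸ (by simp)
    have hca : c ∈ ({a, b} : Finset V) := he ▸ (by simp)
    simp only [Finset.mem_insert, Finset.mem_singleton] at hac hbc hca
    rcases hac with rfl | rfl
    · rcases hbc with rfl | rfl
      · exact absurd h1.2 (lt_irrefl _)
      · rfl
    · rcases hca with rfl | rfl
      · exact absurd h2.2 (lt_irrefl _)
      · exact absurd (h1.2.trans h2.2) (lt_irrefl _)
  have hswap : ∑ x ∈ T.offDiag.filter (fun x => ¬ x.1 < x.2), g {x.1, x.2}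
      = ∑ x ∈ T.offDiag.filter (fun x => x.1 < x.2), g {x.1, x.2} := by
    apply Finset.sum_nbij' (fun x => Prod.swap x) (fun x => Prod.swap x)
    · rintro ⟨a, b⟩ h
      simp only [Finset.mem_filter, Finset.mem_offDiag, Prod.fst_swap, Prod.snd_swap] at h ⊢
      exact ⟨⟨h.1.2.1, h.1.1, Ne.symm h.1.2.2⟩, lt_of_le_of_ne (not_lt.mp h.2) (Ne.symm h.1.2.2)⟩
    · rintro ⟨a, b⟩ h
      simp only [Finset.mem_filter, Finset.mem_offDiag, Prod.fst_swap, Prod.snd_swap] at h ⊢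
      exact ⟨⟨h.1.2.1, h.1.1, Ne.symm h.1.2.2⟩, not_lt.mpr h.2.le⟩
    · intros; rfl
    · intros; rfl
    · rintro ⟨a, b⟩ h; exact Finset.pair_comm b a ▸ rfl
  have hRHS : ∑ p ∈ T, ∑ q ∈ T.erase p, g {p, q}
      = ∑ x ∈ T.offDiag, g {x.1, x.2} := by
    rw [show T.offDiag = (T ×ˢ T).filter (fun a : V × V => a.1 ≠ a.2) by
    ext; simp [and_assoc], Finset.sum_filter, Finset.sum_product]
    refine Finset.sum_congr rfl fun p hp => ?_
    rw [← Finset.sum_filter]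
    congr 1
    ext q
    simp [eq_comm, Finset.mem_erase, and_comm]
  rw [hRHS, ← Finset.sum_filter_add_sum_filter_not T.offDiag (fun x => x.1 < x.2), hswap,
    himg, Finset.sum_image hinj]
  ring

lemma cut_ind (c : Finset V → ℝ) (R : Finset V) (p q : V) (hpq : p ≠ q) :
    (if (({p, q} : Finset V) ∩ R).card = 1 then c {p, q} else 0)
      = c {p, q} * ((if p ∈ R then (1:ℝ) else 0) + (if q ∈ R then (1:ℝ) else 0)
          - 2 * (if p ∈ R then (1:ℝ) else 0) * (if q ∈ R then (1:ℝ) else 0)) := by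
  by_cases hp : p ∈ R <;> by_cases hq : q ∈ R
  · have : ({p, q} : Finset V) ∩ R = {p, q} := by
      rw [Finset.inter_eq_left]; intro r hr
      simp only [Finset.mem_insert, Finset.mem_singleton] at hr
      rcases hr with rfl | rfl <;> assumption
    rw [this, Finset.card_pair hpq]
    simp only [hp, hq, if_true]
    norm_num
  · have : ({p, q} : Finset V) ∩ R = {p} := by
      ext r
      simp only [Finset.mem_inter, Finset.mem_insert, Finset.mem_singleton]
      constructor
      · rintro ⟨rfl | rfl, hr⟩
        · rfl
        · exact absurd hr hq
      · rintro rfl; exact ⟨Or.inl rfl, hp⟩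
    rw [this, Finset.card_singleton]
    simp only [hp, hq, if_true, if_false]
    ring
  · have : ({p, q} : Finset V) ∩ R = {q} := by
      ext r
      simp only [Finset.mem_inter, Finset.mem_insert, Finset.mem_singleton]
      constructor
      · rintro ⟨rfl | rfl, hr⟩
        · exact absurd hr hp
        · rfl
      · rintro rfl; exact ⟨Or.inr rfl, hq⟩
    rw [this, Finset.card_singleton]
    simp only [hp, hq, if_true, if_false]
    ring
  · have : ({p, q} : Finset V) ∩ R = ∅ := by
      ext r
      simp only [Finset.mem_inter, Finset.mem_insert, Finset.mem_singleton]
      constructor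
      · rintro ⟨rfl | rfl, hr⟩
        exacts [absurd hr hp, absurd hr hq]
      · rintro h; exact absurd h (Finset.notMem_empty r)
    rw [this, Finset.card_empty]
    simp only [hp, hq, if_false]
    norm_num

variable {V : Type*} [DecidableEq V]

lemma offDiag_double (T : Finset V) (F : V → V → ℝ) :
    ∑ x ∈ T.offDiag, F x.1 x.2 = ∑ p ∈ T, ∑ q ∈ T.erase p, F p q := by
  rw [show T.offDiag = (T ×ˢ T).filter (fun a : V × V => a.1 ≠ a.2) by
    ext; simp [and_assoc], Finset.sum_filter, Finset.sum_product]
  refine Finset.sum_congr rfl fun p hp => ?_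
  rw [← Finset.sum_filter]
  congr 1
  ext q
  simp [eq_comm, Finset.mem_erase, and_comm]

lemma offDiag_swap (T : Finset V) (F : V → V → ℝ) :
    ∑ x ∈ T.offDiag, F x.1 x.2 = ∑ x ∈ T.offDiag, F x.2 x.1 := by
  apply Finset.sum_nbij' (fun x => Prod.swap x) (fun x => Prod.swap x) <;>
    (first | (intros; simp_all [Finset.mem_offDiag]; tauto) | simp [Finset.mem_offDiag])

lemma swap_double (T : Finset V) (F : V → V → ℝ) :
    ∑ p ∈ T, ∑ q ∈ T.erase p, F p q = ∑ p ∈ T, ∑ q ∈ T.erase p, F q p := by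
  rw [← offDiag_double, ← offDiag_double T (fun p q => F q p), offDiag_swap]

lemma core [Fintype V] (c : Finset V → ℝ) (i : V) (S₀ : Finset V) (hiS₀ : i ∉ S₀)
    (x : V → ℝ) (hxi : x i = 1) (hx0 : ∀ p ∈ S₀, x p = 0) :
    ∑ p ∈ univ, ∑ q ∈ univ.erase p, c {p, q} * (x p + x q - 2 * x p * x q)
      = ∑ p ∈ univ \ insert i S₀, ∑ q ∈ (univ \ insert i S₀).erase p,
          (-2 * c {p, q}) * (x p * x q)
        + 2 * ∑ p ∈ univ \ insert i S₀,
            (∑ q ∈ univ \ {p}, c {p, q} - 2 * c {p, i}) * x p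
        + 2 * ∑ q ∈ univ \ {i}, c {q, i} := by
  classical
  set A : Finset V := insert i S₀ with hA
  set S' : Finset V := univ \ A with hS'
  have hiA : i ∈ A := Finset.mem_insert_self _ _
  have hmemS' : ∀ p, p ∈ S' ↔ p ∉ A := by intro p; simp [hS']
  have hS'i : ∀ p ∈ S', p ≠ i := fun p hp => by
    intro h; exact ((hmemS' p).mp hp) (h ▸ hiA)
  have hS'0 : ∀ p ∈ S', p ∉ S₀ := fun p hp h =>
    ((hmemS' p).mp hp) (Finset.mem_insert_of_mem h)
  -- decomposition lemmas
  have hU : ∀ F : V → ℝ, ∑ p ∈ univ, F p = ∑ p ∈ S', F p + (F i + ∑ p ∈ S₀, F p) := by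
    intro F
    rw [← Finset.sum_sdiff (Finset.subset_univ A), ← hS', hA, Finset.sum_insert hiS₀]
  have hEp : ∀ p ∈ S', ∀ F : V → ℝ,
      ∑ q ∈ univ.erase p, F q = ∑ q ∈ S'.erase p, F q + (F i + ∑ q ∈ S₀, F q) := by
    intro p hp F
    have hsub : A ⊆ univ.erase p := fun q hq =>
      Finset.mem_erase.mpr ⟨fun h => ((hmemS' p).mp hp) (h ▸ hq), Finset.mem_univ q⟩
    have hid : (univ.erase p) \ A = S'.erase p := by
      ext r; simp [hS', Finset.mem_erase, Finset.mem_sdiff]; try tauto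
    rw [← Finset.sum_sdiff hsub, hid, hA, Finset.sum_insert hiS₀]
  have hEi : ∀ F : V → ℝ, ∑ q ∈ univ.erase i, F q = ∑ q ∈ S', F q + ∑ q ∈ S₀, F q := by
    intro F
    have hsub : S₀ ⊆ univ.erase i := fun q hq =>
      Finset.mem_erase.mpr ⟨fun h => hiS₀ (h ▸ hq), Finset.mem_univ q⟩
    have hid : (univ.erase i) \ S₀ = S' := by
      ext r; simp [hS', hA, Finset.mem_erase, Finset.mem_sdiff]; try tauto
    rw [← Finset.sum_sdiff hsub, hid]
  have hE0 : ∀ p ∈ S₀, ∀ F : V → ℝ,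
      ∑ q ∈ univ.erase p, F q = ∑ q ∈ S', F q + (F i + ∑ q ∈ S₀.erase p, F q) := by
    intro p hp F
    have hip : i ≠ p := fun h => hiS₀ (h ▸ hp)
    have hsub : A.erase p ⊆ univ.erase p := fun q hq =>
      Finset.mem_erase.mpr ⟨(Finset.mem_erase.mp hq).1, Finset.mem_univ q⟩
    have hp' : p ∈ A := Finset.mem_insert_of_mem hp
    have hid : (univ.erase p) \ (A.erase p) = S' := by
      ext r
      constructor
      · intro hr
        rw [Finset.mem_sdiff] at hr
        obtain ⟨hr1, hr2⟩ := hr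
        have hrp := (Finset.mem_erase.mp hr1).1
        rw [hmemS' r]
        intro hrA
        exact hr2 (Finset.mem_erase.mpr ⟨hrp, hrA⟩)
      · intro hr
        have hrA := (hmemS' r).mp hr
        rw [Finset.mem_sdiff]
        have hrp : r ≠ p := fun h => hrA (h ▸ hp')
        exact ⟨Finset.mem_erase.mpr ⟨hrp, Finset.mem_univ r⟩,
          fun h => hrA (Finset.mem_of_mem_erase h)⟩
    have hAe : A.erase p = insert i (S₀.erase p) := by
      rw [hA, Finset.erase_insert_of_ne hip]
    rw [← Finset.sum_sdiff hsub, hid, hAe,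
      Finset.sum_insert (fun h => hiS₀ (Finset.mem_of_mem_erase h))]
  -- evaluate the three chunks of the LHS
  have hLHS : ∑ p ∈ univ, ∑ q ∈ univ.erase p, c {p, q} * (x p + x q - 2 * x p * x q)
      = (∑ p ∈ S', (x p * (∑ q ∈ S'.erase p, c {p, q})
            + (∑ q ∈ S'.erase p, c {p, q} * x q)
            - 2 * (x p * ∑ q ∈ S'.erase p, c {p, q} * x q)
            + (c {p, i} - c {p, i} * x p)
            + x p * ∑ q ∈ S₀, c {p, q}))
        + (((∑ q ∈ S', c {q, i}) - ∑ q ∈ S', c {q, i} * x q) + ∑ q ∈ S₀, c {q, i}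
          + (∑ p ∈ S₀, ((∑ q ∈ S', c {p, q} * x q) + c {p, i}))) := by
    rw [hU]
    congr 1
    · refine Finset.sum_congr rfl fun p hp => ?_
      rw [hEp p hp]
      have e1 : ∑ q ∈ S'.erase p, c {p, q} * (x p + x q - 2 * x p * x q)
          = x p * (∑ q ∈ S'.erase p, c {p, q})
            + (∑ q ∈ S'.erase p, c {p, q} * x q)
            - 2 * (x p * ∑ q ∈ S'.erase p, c {p, q} * x q) := by
        simp only [Finset.mul_sum]
        rw [← Finset.sum_add_distrib, ← Finset.sum_sub_distrib]
        exact Finset.sum_congr rfl fun q _ => by ring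
      have e2 : c {p, i} * (x p + x i - 2 * x p * x i) = c {p, i} - c {p, i} * x p := by
        rw [hxi]; ring
      have e3 : ∑ q ∈ S₀, c {p, q} * (x p + x q - 2 * x p * x q)
          = x p * ∑ q ∈ S₀, c {p, q} := by
        rw [Finset.mul_sum]
        exact Finset.sum_congr rfl fun q hq => by rw [hx0 q hq]; ring
      rw [e1, e2, e3]
      ring
    · have e4 : ∑ q ∈ univ.erase i, c {i, q} * (x i + x q - 2 * x i * x q)
          = ((∑ q ∈ S', c {q, i}) - ∑ q ∈ S', c {q, i} * x q) + ∑ q ∈ S₀, c {q, i} := by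
        rw [hEi]
        have e5 : ∑ q ∈ S', c {i, q} * (x i + x q - 2 * x i * x q)
            = (∑ q ∈ S', c {q, i}) - ∑ q ∈ S', c {q, i} * x q := by
          rw [← Finset.sum_sub_distrib]
          refine Finset.sum_congr rfl fun q hq => ?_
          rw [hxi, Finset.pair_comm i q]; ring
        have e6 : ∑ q ∈ S₀, c {i, q} * (x i + x q - 2 * x i * x q) = ∑ q ∈ S₀, c {q, i} := by
          refine Finset.sum_congr rfl fun q hq => ?_
          rw [hxi, hx0 q hq, Finset.pair_comm i q]; ring
        rw [e5, e6]
      have e7 : ∑ p ∈ S₀, ∑ q ∈ univ.erase p, c {p, q} * (x p + x q - 2 * x p * x q)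
          = ∑ p ∈ S₀, ((∑ q ∈ S', c {p, q} * x q) + c {p, i}) := by
        refine Finset.sum_congr rfl fun p hp => ?_
        rw [hE0 p hp]
        have e8 : ∑ q ∈ S', c {p, q} * (x p + x q - 2 * x p * x q)
            = ∑ q ∈ S', c {p, q} * x q := by
          refine Finset.sum_congr rfl fun q hq => ?_
          rw [hx0 p hp]; ring
        have e9 : c {p, i} * (x p + x i - 2 * x p * x i) = c {p, i} := by
          rw [hxi, hx0 p hp]; ring
        have e10 : ∑ q ∈ S₀.erase p, c {p, q} * (x p + x q - 2 * x p * x q) = 0 := by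
          refine Finset.sum_eq_zero fun q hq => ?_
          rw [hx0 p hp, hx0 q (Finset.mem_of_mem_erase hq)]; ring
        rw [e8, e9, e10]
        ring
      rw [e4, e7]
  -- evaluate the RHS
  have hRHS : ∑ p ∈ S', ∑ q ∈ S'.erase p, (-2 * c {p, q}) * (x p * x q)
        + 2 * ∑ p ∈ S', (∑ q ∈ univ \ {p}, c {p, q} - 2 * c {p, i}) * x p
        + 2 * ∑ q ∈ univ \ {i}, c {q, i}
      = (∑ p ∈ S', (-2) * (x p * ∑ q ∈ S'.erase p, c {p, q} * x q))
        + 2 * ∑ p ∈ S', ((∑ q ∈ S'.erase p, c {p, q}) + c {p, i} + (∑ q ∈ S₀, c {p, q})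
            - 2 * c {p, i}) * x p
        + 2 * ((∑ q ∈ S', c {q, i}) + ∑ q ∈ S₀, c {q, i}) := by
    congr 1
    · congr 1
      · refine Finset.sum_congr rfl fun p hp => ?_
        rw [Finset.mul_sum, Finset.mul_sum]
        exact Finset.sum_congr rfl fun q _ => by ring
      · congr 1
        refine Finset.sum_congr rfl fun p hp => ?_
        rw [Finset.sdiff_singleton_eq_erase, hEp p hp (fun q => c {p, q})]
        ring
    · congr 1
      rw [Finset.sdiff_singleton_eq_erase, hEi (fun q => c {q, i})]
  rw [hLHS, hRHS]
  -- global swap identities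
  have hI : ∑ p ∈ S', ∑ q ∈ S'.erase p, c {p, q} * x q
      = ∑ p ∈ S', x p * ∑ q ∈ S'.erase p, c {p, q} := by
    rw [swap_double S' (fun p q => c {p, q} * x q)]
    refine Finset.sum_congr rfl fun p hp => ?_
    rw [Finset.mul_sum]
    exact Finset.sum_congr rfl fun q hq => by rw [Finset.pair_comm]; ring
  have hII : ∑ p ∈ S₀, ∑ q ∈ S', c {p, q} * x q
      = ∑ p ∈ S', x p * ∑ q ∈ S₀, c {p, q} := by
    rw [Finset.sum_comm]
    refine Finset.sum_congr rfl fun q hq => ?_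
    rw [Finset.mul_sum]
    exact Finset.sum_congr rfl fun p hp => by rw [Finset.pair_comm]; ring
  have split1 : ∑ p ∈ S', (x p * (∑ q ∈ S'.erase p, c {p, q})
        + (∑ q ∈ S'.erase p, c {p, q} * x q)
        - 2 * (x p * ∑ q ∈ S'.erase p, c {p, q} * x q)
        + (c {p, i} - c {p, i} * x p)
        + x p * ∑ q ∈ S₀, c {p, q})
      = (∑ p ∈ S', x p * ∑ q ∈ S'.erase p, c {p, q})
        + (∑ p ∈ S', ∑ q ∈ S'.erase p, c {p, q} * x q)
        - 2 * (∑ p ∈ S', x p * ∑ q ∈ S'.erase p, c {p, q} * x q)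
        + ((∑ p ∈ S', c {p, i}) - ∑ p ∈ S', c {p, i} * x p)
        + ∑ p ∈ S', x p * ∑ q ∈ S₀, c {p, q} := by
    simp only [Finset.sum_add_distrib, Finset.sum_sub_distrib, ← Finset.mul_sum]
  have split2 : ∑ p ∈ S₀, ((∑ q ∈ S', c {p, q} * x q) + c {p, i})
      = (∑ p ∈ S₀, ∑ q ∈ S', c {p, q} * x q) + ∑ p ∈ S₀, c {p, i} := by
    rw [Finset.sum_add_distrib]
  have split3 : ∑ p ∈ S', ((∑ q ∈ S'.erase p, c {p, q}) + c {p, i} + (∑ q ∈ S₀, c {p, q})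
        - 2 * c {p, i}) * x p
      = (∑ p ∈ S', x p * ∑ q ∈ S'.erase p, c {p, q}) + (∑ p ∈ S', c {p, i} * x p)
        + (∑ p ∈ S', x p * ∑ q ∈ S₀, c {p, q}) - 2 * ∑ p ∈ S', c {p, i} * x p := by
    rw [Finset.mul_sum, ← Finset.sum_add_distrib, ← Finset.sum_add_distrib,
      ← Finset.sum_sub_distrib]
    exact Finset.sum_congr rfl fun p _ => by ring
  have splitQ : ∑ p ∈ S', (-2) * (x p * ∑ q ∈ S'.erase p, c {p, q} * x q)
      = (-2) * ∑ p ∈ S', x p * ∑ q ∈ S'.erase p, c {p, q} * x q := by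
    rw [Finset.mul_sum]
  have hPI : ∑ p ∈ S₀, c {p, i} = ∑ q ∈ S₀, c {q, i} := rfl
  rw [split1, split2, split3, splitQ, hI, hII]
  ring

lemma key_cut_identity [Fintype V] (c : Finset V → ℝ) (i : V) (S₀ : Finset V) (hiS₀ : i ∉ S₀)
    (R : Finset V) (hiR : i ∈ R) (hR0 : ∀ p ∈ S₀, p ∉ R) :
    ∑ e ∈ cut R, c e
      = ∑ e ∈ ((univ : Finset V) \ insert i S₀).powersetCard 2,
            (-2 * c e) * ∏ p ∈ e, (if p ∈ R then (1:ℝ) else 0)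
        + ∑ p ∈ (univ : Finset V) \ insert i S₀,
            (∑ q ∈ univ \ {p}, c {p, q} - 2 * c {p, i}) * (if p ∈ R then (1:ℝ) else 0)
        + ∑ q ∈ univ \ {i}, c {q, i} := by
  set x : V → ℝ := fun p => if p ∈ R then 1 else 0 with hxdef
  have hxi : x i = 1 := if_pos hiR
  have hx0 : ∀ p ∈ S₀, x p = 0 := fun p hp => if_neg (hR0 p hp)
  have h1 : 2 * ∑ e ∈ cut R, c e
      = ∑ p ∈ univ, ∑ q ∈ univ.erase p, c {p, q} * (x p + x q - 2 * x p * x q) := by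
    rw [cut, pairs, Finset.sum_filter, sum_pairs]
    exact Finset.sum_congr rfl fun p _ => Finset.sum_congr rfl fun q hq =>
      cut_ind c R p q (Ne.symm (Finset.mem_erase.mp hq).1)
  have h2 : 2 * ∑ e ∈ ((univ : Finset V) \ insert i S₀).powersetCard 2,
        (-2 * c e) * ∏ p ∈ e, x p
      = ∑ p ∈ (univ : Finset V) \ insert i S₀,
          ∑ q ∈ ((univ : Finset V) \ insert i S₀).erase p, (-2 * c {p, q}) * (x p * x q) := by
    rw [sum_pairs]
    refine Finset.sum_congr rfl fun p _ => Finset.sum_congr rfl fun q hq => ?_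
    rw [Finset.prod_pair (Ne.symm (Finset.mem_erase.mp hq).1)]
  have h3 := core c i S₀ hiS₀ x hxi hx0
  linarith [h1, h2, h3]

end Aux

theorem st_cut_to_qpbo {V : Type*} [Fintype V] [DecidableEq V] [Nonempty V]
    (c : Finset V → ℝ) (i : V) (S₀ : Finset V) (hiS₀ : i ∉ S₀) :
    ∃ m : ℝ,
      IsLeast {v : ℝ | ∃ R : Finset V, i ∈ R ∧ (∀ p ∈ S₀, p ∉ R) ∧
        v = ∑ e ∈ cut R, c e} m ∧
      IsLeast {v : ℝ | ∃ y : V → ℝ,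
        (∀ p ∈ (univ : Finset V) \ insert i S₀, y p = 0 ∨ y p = 1) ∧
        v = ∑ e ∈ ((univ : Finset V) \ insert i S₀).powersetCard 2,
              (-2 * c e) * ∏ p ∈ e, y p
          + ∑ p ∈ (univ : Finset V) \ insert i S₀,
              (∑ q ∈ univ \ {p}, c {p, q} - 2 * c {p, i}) * y p
          + ∑ q ∈ univ \ {i}, c {q, i}} m := by
  classical
  set T : Finset (Finset V) := univ.filter (fun R => i ∈ R ∧ ∀ p ∈ S₀, p ∉ R) with hT
  have hTne : T.Nonempty := by
    refine ⟨{i}, Finset.mem_filter.mpr ⟨Finset.mem_univ _, Finset.mem_singleton_self i, ?_⟩⟩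
    intro p hp h
    exact hiS₀ ((Finset.mem_singleton.mp h) ▸ hp)
  set Tv : Finset ℝ := T.image (fun R => ∑ e ∈ cut R, c e) with hTv
  have hTvne : Tv.Nonempty := hTne.image _
  refine ⟨Tv.min' hTvne, ⟨?_, ?_⟩, ⟨?_, ?_⟩⟩
  · obtain ⟨R, hR, hval⟩ := Finset.mem_image.mp (Tv.min'_mem hTvne)
    have hR' := Finset.mem_filter.mp hR
    exact ⟨R, hR'.2.1, hR'.2.2, hval.symm⟩
  · rintro v ⟨R, hiR, hR0, rfl⟩
    exact Tv.min'_le _ (Finset.mem_image_of_mem _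
      (Finset.mem_filter.mpr ⟨Finset.mem_univ _, hiR, hR0⟩))
  · obtain ⟨R, hR, hval⟩ := Finset.mem_image.mp (Tv.min'_mem hTvne)
    have hR' := Finset.mem_filter.mp hR
    refine ⟨fun p => if p ∈ R then (1:ℝ) else 0, fun p _ => ?_, ?_⟩
    · by_cases h : p ∈ R <;> simp [h]
    · rw [← hval]
      exact key_cut_identity c i S₀ hiS₀ R hR'.2.1 hR'.2.2
  · rintro v ⟨y, hy, rfl⟩
    set R : Finset V := insert i ((((univ : Finset V) \ insert i S₀)).filter
      (fun p => y p = 1)) with hR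
    have hiR : i ∈ R := Finset.mem_insert_self _ _
    have hR0 : ∀ p ∈ S₀, p ∉ R := by
      intro p hp h
      rcases Finset.mem_insert.mp h with h | h
      · exact hiS₀ (h ▸ hp)
      · have := (Finset.mem_sdiff.mp (Finset.mem_filter.mp h).1).2
        exact this (Finset.mem_insert_of_mem hp)
    have hagree : ∀ p ∈ (univ : Finset V) \ insert i S₀,
        (if p ∈ R then (1:ℝ) else 0) = y p := by
      intro p hp
      have hpi : p ≠ i := by
        intro h
        exact (Finset.mem_sdiff.mp hp).2 (h ▸ Finset.mem_insert_self i S₀)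
      by_cases h1 : y p = 1
      · rw [if_pos (Finset.mem_insert_of_mem (Finset.mem_filter.mpr ⟨hp, h1⟩)), h1]
      · have h0 : y p = 0 := (hy p hp).resolve_right h1
        have hnR : p ∉ R := by
          intro hpr
          rcases Finset.mem_insert.mp hpr with h | h
          · exact hpi h
          · exact h1 (Finset.mem_filter.mp h).2
        rw [if_neg hnR, h0]
    have hkey := key_cut_identity c i S₀ hiS₀ R hiR hR0
    have hQ : ∑ e ∈ ((univ : Finset V) \ insert i S₀).powersetCard 2,
          (-2 * c e) * ∏ p ∈ e, (if p ∈ R then (1:ℝ) else 0)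
        + ∑ p ∈ (univ : Finset V) \ insert i S₀,
            (∑ q ∈ univ \ {p}, c {p, q} - 2 * c {p, i}) * (if p ∈ R then (1:ℝ) else 0)
        + ∑ q ∈ univ \ {i}, c {q, i}
        = ∑ e ∈ ((univ : Finset V) \ insert i S₀).powersetCard 2,
            (-2 * c e) * ∏ p ∈ e, y p
          + ∑ p ∈ (univ : Finset V) \ insert i S₀,
              (∑ q ∈ univ \ {p}, c {p, q} - 2 * c {p, i}) * y p
          + ∑ q ∈ univ \ {i}, c {q, i} := by
      congr 1
      congr 1
      · refine Finset.sum_congr rfl fun e he => ?_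
        have hsub := (Finset.mem_powersetCard.mp he).1
        rw [Finset.prod_congr rfl fun p hp => hagree p (hsub hp)]
      · exact Finset.sum_congr rfl fun p hp => by rw [hagree p hp]
    rw [← hQ, ← hkey]
    exact Tv.min'_le _ (Finset.mem_image_of_mem _
      (Finset.mem_filter.mpr ⟨Finset.mem_univ _, hiR, hR0⟩))
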